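/- Let φ, f : I → ℝ be positive differentiable functions, n ≥ 3, m ≥ 1, c₄, c₅ ∈ ℝ. If h : I → ℝ satisfies h'(ξ) = φ(ξ)^(−2)·[∫(m(f''/f)φ² + 2mφφ'(f'/f) − (n−2)φφ'') dξ + c₄], then h satisfies the linear ODE (n−2)fφ'' + fφh'' − mφf'' − 2mφ'f' + 2fφ'h' = 0 on I. -/

import Mathlib

/-- Theorem 1.7: If h'(ξ) = φ(ξ)⁻²·(G(ξ) + c₄) where G is an
antiderivative of m(f''/f)φ² + 2mφφ'(f'/f) − (n−2)φφ'', then h satisfies the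
linear ODE (n−2)fφ'' + fφh'' − mφf'' − 2mφ'f' + 2fφ'h' = 0. -/
theorem stmt_9 (n m : ℕ) (hn : 3 ≤ n) (hm : 1 ≤ m) (c₄ c₅ : ℝ)
    (a b : ℝ) (I : Set ℝ) (hI : I = Set.Ioo a b)
    (φ f h G : ℝ → ℝ)
    (hφreg : ∀ ξ ∈ I, ContDiffAt ℝ 2 φ ξ)
    (hfreg : ∀ ξ ∈ I, ContDiffAt ℝ 2 f ξ)
    (hφpos : ∀ ξ ∈ I, 0 < φ ξ) (hfpos : ∀ ξ ∈ I, 0 < f ξ)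
    (hG : ∀ ξ ∈ I, HasDerivAt G
      ((m : ℝ) * (deriv (deriv f) ξ / f ξ) * φ ξ ^ 2
        + 2 * (m : ℝ) * φ ξ * deriv φ ξ * (deriv f ξ / f ξ)
        - ((n : ℝ) - 2) * φ ξ * deriv (deriv φ) ξ) ξ)
    (hh' : ∀ ξ ∈ I, deriv h ξ = (G ξ + c₄) / φ ξ ^ 2)
    (hhd : ∀ ξ ∈ I, DifferentiableAt ℝ h ξ) :
    ∀ ξ ∈ I,
      ((n : ℝ) - 2) * f ξ * deriv (deriv φ) ξ + f ξ * φ ξ * deriv (deriv h) ξ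
        - (m : ℝ) * φ ξ * deriv (deriv f) ξ - 2 * (m : ℝ) * deriv φ ξ * deriv f ξ
        + 2 * f ξ * deriv φ ξ * deriv h ξ = 0 := by
  intro ξ hξ
  have hIopen : IsOpen I := hI ▸ isOpen_Ioo
  have hmem : I ∈ nhds ξ := hIopen.mem_nhds hξ
  have hφ0 : φ ξ ≠ 0 := (hφpos ξ hξ).ne'
  have hf0 : f ξ ≠ 0 := (hfpos ξ hξ).ne'
  have hφd : DifferentiableAt ℝ φ ξ :=
    (hφreg ξ hξ).differentiableAt (by norm_num)
  have h2 : HasDerivAt (fun x => φ x ^ 2) (2 * φ ξ * deriv φ ξ) ξ := by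
    simpa [mul_comm] using hφd.hasDerivAt.fun_pow 2
  have h1 : HasDerivAt (fun x => G x + c₄)
      ((m : ℝ) * (deriv (deriv f) ξ / f ξ) * φ ξ ^ 2
        + 2 * (m : ℝ) * φ ξ * deriv φ ξ * (deriv f ξ / f ξ)
        - ((n : ℝ) - 2) * φ ξ * deriv (deriv φ) ξ) ξ := (hG ξ hξ).add_const c₄
  have hFd : HasDerivAt (fun x => (G x + c₄) / φ x ^ 2)
      ((((m : ℝ) * (deriv (deriv f) ξ / f ξ) * φ ξ ^ 2
        + 2 * (m : ℝ) * φ ξ * deriv φ ξ * (deriv f ξ / f ξ)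
        - ((n : ℝ) - 2) * φ ξ * deriv (deriv φ) ξ) * φ ξ ^ 2
        - (G ξ + c₄) * (2 * φ ξ * deriv φ ξ)) / (φ ξ ^ 2) ^ 2) ξ :=
    h1.div h2 (pow_ne_zero 2 hφ0)
  have heq : deriv h =ᶠ[nhds ξ] fun x => (G x + c₄) / φ x ^ 2 :=
    Filter.eventuallyEq_of_mem hmem hh'
  have hh'' : deriv (deriv h) ξ
      = (((m : ℝ) * (deriv (deriv f) ξ / f ξ) * φ ξ ^ 2
        + 2 * (m : ℝ) * φ ξ * deriv φ ξ * (deriv f ξ / f ξ)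
        - ((n : ℝ) - 2) * φ ξ * deriv (deriv φ) ξ) * φ ξ ^ 2
        - (G ξ + c₄) * (2 * φ ξ * deriv φ ξ)) / (φ ξ ^ 2) ^ 2 :=
    heq.deriv_eq.trans hFd.deriv
  rw [hh'', hh' ξ hξ]
  field_simp
  ring
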